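/- Every 4-divisible set of exactly 7 points in PG(v-1,2) is the point set of a plane (a 3-dimensional subspace of F_2^v). -/

import Mathlib

open Classical Module

lemma aux_finite_dual (v : ℕ) : Finite ((Fin v → ZMod 2) →ₗ[ZMod 2] ZMod 2) :=
  Finite.of_injective (fun φ => (φ : (Fin v → ZMod 2) → ZMod 2)) DFunLike.coe_injective

lemma aux_sum_sign (v : ℕ) [Fintype ((Fin v → ZMod 2) →ₗ[ZMod 2] ZMod 2)]
    (x : Fin v → ZMod 2) (hx : x ≠ 0) :
    ∑ φ : (Fin v → ZMod 2) →ₗ[ZMod 2] ZMod 2,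
      (if φ x = 0 then (1 : ℤ) else -1) = 0 := by
  obtain ⟨i, hi⟩ : ∃ i, x i ≠ 0 := by
    by_contra h; push_neg at h; exact hx (funext h)
  set ψ : (Fin v → ZMod 2) →ₗ[ZMod 2] ZMod 2 := LinearMap.proj i with hψdef
  have hone : ∀ a : ZMod 2, a ≠ 0 → a = 1 := by decide
  have hψ : ψ x = 1 := hone _ hi
  have hflip : ∀ φ : (Fin v → ZMod 2) →ₗ[ZMod 2] ZMod 2,
      (if (φ + ψ) x = 0 then (1 : ℤ) else -1) = -(if φ x = 0 then (1 : ℤ) else -1) := by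
    intro φ
    have h2 : (φ + ψ) x = φ x + 1 := by simp [hψ]
    have h3 : ∀ a : ZMod 2,
        (if a + 1 = 0 then (1 : ℤ) else -1) = -(if a = 0 then (1 : ℤ) else -1) := by decide
    rw [h2, h3]
  have hbij := Fintype.sum_equiv (Equiv.addRight ψ)
    (fun φ : (Fin v → ZMod 2) →ₗ[ZMod 2] ZMod 2 => (if (φ + ψ) x = 0 then (1 : ℤ) else -1))
    (fun φ => (if φ x = 0 then (1 : ℤ) else -1)) (fun φ => rfl)
  have key : ∑ φ : (Fin v → ZMod 2) →ₗ[ZMod 2] ZMod 2, (if φ x = 0 then (1 : ℤ) else -1)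
      = -∑ φ : (Fin v → ZMod 2) →ₗ[ZMod 2] ZMod 2, (if φ x = 0 then (1 : ℤ) else -1) := by
    conv_lhs => rw [← hbij]
    simp only [hflip, Finset.sum_neg_distrib]
  linarith

/-- Every 4-divisible set of exactly 7 points in PG(v-1,2) is the point set of
a plane, i.e. of a 3-dimensional subspace of F_2^v. -/
theorem four_divisible_card_seven_is_plane (v : ℕ)
    (S : Finset (Fin v → ZMod 2)) (h0 : ∀ x ∈ S, x ≠ 0)
    (hdiv : ∀ φ : (Fin v → ZMod 2) →ₗ[ZMod 2] ZMod 2, φ ≠ 0 →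
      4 ∣ (S.filter (fun x => φ x ≠ 0)).card)
    (hcard : S.card = 7) :
    ∃ W : Submodule (ZMod 2) (Fin v → ZMod 2), finrank (ZMod 2) ↥W = 3 ∧
      (S : Set (Fin v → ZMod 2)) = {x | x ∈ W ∧ x ≠ 0} := by
  classical
  haveI := aux_finite_dual v
  haveI : Fintype ((Fin v → ZMod 2) →ₗ[ZMod 2] ZMod 2) := Fintype.ofFinite _
  set W : Submodule (ZMod 2) (Fin v → ZMod 2) := Submodule.span (ZMod 2) ↑S with hWdef
  set d : ℕ := finrank (ZMod 2) ↥W with hddef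
  -- the inner sum identity
  have hinner : ∀ φ : (Fin v → ZMod 2) →ₗ[ZMod 2] ZMod 2,
      ∑ x ∈ S, (if φ x = 0 then (1 : ℤ) else -1)
        = 7 - 2 * ((S.filter (fun x => φ x ≠ 0)).card : ℤ) := by
    intro φ
    have hsplit : ∀ x : Fin v → ZMod 2, (if φ x = 0 then (1 : ℤ) else -1)
        = 1 - 2 * (if φ x ≠ 0 then (1 : ℤ) else 0) := by
      intro x; by_cases h : φ x = 0 <;> simp [h]
    rw [Finset.sum_congr rfl (fun x _ => hsplit x)]
    rw [Finset.sum_sub_distrib, Finset.sum_const, ← Finset.mul_sum, Finset.sum_boole]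
    simp only [smul_eq_mul, mul_one, hcard]
    norm_num
  -- total sum is zero
  have hzero : ∑ φ : (Fin v → ZMod 2) →ₗ[ZMod 2] ZMod 2,
      ((7 : ℤ) - 2 * ((S.filter (fun x => φ x ≠ 0)).card : ℤ)) = 0 := by
    rw [← Finset.sum_congr rfl (fun φ _ => hinner φ), Finset.sum_comm]
    rw [Finset.sum_congr rfl (fun x hx => aux_sum_sign v x (h0 x hx))]
    simp
  -- membership in annihilator characterization
  have hann : ∀ φ : (Fin v → ZMod 2) →ₗ[ZMod 2] ZMod 2,
      φ ∈ W.dualAnnihilator ↔ (S.filter (fun x => φ x ≠ 0)).card = 0 := by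
    intro φ
    rw [Submodule.mem_dualAnnihilator, Finset.card_eq_zero, Finset.filter_eq_empty_iff]
    constructor
    · intro h x hx
      simp only [ne_eq, not_not]
      exact h x (Submodule.subset_span hx)
    · intro h w hw
      have hker : W ≤ LinearMap.ker φ := by
        rw [hWdef, Submodule.span_le]
        intro x hx
        have := h (by simpa using hx)
        simpa using this
      exact hker hw
  -- value of each term
  have hval : ∀ φ : (Fin v → ZMod 2) →ₗ[ZMod 2] ZMod 2,
      ((7 : ℤ) - 2 * ((S.filter (fun x => φ x ≠ 0)).card : ℤ))
        = if φ ∈ W.dualAnnihilator then 7 else -1 := by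
    intro φ
    by_cases hφ : φ ∈ W.dualAnnihilator
    · rw [if_pos hφ, (hann φ).1 hφ]; norm_num
    · rw [if_neg hφ]
      have hφ0 : φ ≠ 0 := by
        rintro rfl; exact hφ (Submodule.zero_mem _)
      have h4 := hdiv φ hφ0
      have hne : (S.filter (fun x => φ x ≠ 0)).card ≠ 0 := fun h => hφ ((hann φ).2 h)
      have hle : (S.filter (fun x => φ x ≠ 0)).card ≤ 7 := hcard ▸ Finset.card_filter_le _ _
      have h44 : (S.filter (fun x => φ x ≠ 0)).card = 4 := by omega
      rw [h44]; norm_num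
  -- counting
  set A : Finset ((Fin v → ZMod 2) →ₗ[ZMod 2] ZMod 2) :=
    Finset.univ.filter (fun φ => φ ∈ W.dualAnnihilator) with hAdef
  have hA_le : A.card ≤ Fintype.card ((Fin v → ZMod 2) →ₗ[ZMod 2] ZMod 2) := by
    rw [hAdef]; exact (Finset.card_filter_le _ _).trans (by simp)
  have hsumval : ∑ φ : (Fin v → ZMod 2) →ₗ[ZMod 2] ZMod 2,
      (if φ ∈ W.dualAnnihilator then (7 : ℤ) else -1)
      = 7 * A.card - ((Fintype.card ((Fin v → ZMod 2) →ₗ[ZMod 2] ZMod 2) : ℤ) - A.card) := by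
    rw [Finset.sum_ite, Finset.sum_const, Finset.sum_const]
    have h1 : (Finset.univ.filter (fun φ : (Fin v → ZMod 2) →ₗ[ZMod 2] ZMod 2 =>
        ¬ φ ∈ W.dualAnnihilator)).card
        = Fintype.card ((Fin v → ZMod 2) →ₗ[ZMod 2] ZMod 2) - A.card := by
      have h2 := Finset.card_filter_add_card_filter_not
        (s := (Finset.univ : Finset ((Fin v → ZMod 2) →ₗ[ZMod 2] ZMod 2)))
        (p := fun φ => φ ∈ W.dualAnnihilator)
      simp only [Finset.card_univ] at h2
      rw [← hAdef] at h2
      omega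
    rw [h1]
    simp only [nsmul_eq_mul, smul_eq_mul]
    rw [Nat.cast_sub hA_le]
    ring
  have hEq : (7 : ℤ) * A.card
      - ((Fintype.card ((Fin v → ZMod 2) →ₗ[ZMod 2] ZMod 2) : ℤ) - A.card) = 0 := by
    rw [← hsumval, ← Finset.sum_congr rfl (fun φ _ => hval φ)]
    exact hzero
  -- card of dual space
  have hVfin : finrank (ZMod 2) (Fin v → ZMod 2) = v := Module.finrank_fin_fun _
  have hDcard : Fintype.card ((Fin v → ZMod 2) →ₗ[ZMod 2] ZMod 2) = 2 ^ v := by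
    have h1 : finrank (ZMod 2) ((Fin v → ZMod 2) →ₗ[ZMod 2] ZMod 2) = v := by
      have h2 := Subspace.dual_finrank_eq (K := ZMod 2) (V := Fin v → ZMod 2)
      rw [hVfin] at h2
      exact h2
    rw [card_eq_pow_finrank (K := ZMod 2), h1, ZMod.card]
  -- card of annihilator
  have hd_le : d ≤ v := hVfin ▸ Submodule.finrank_le W
  have hAnnrank : finrank (ZMod 2) ↥W.dualAnnihilator = v - d := by
    have hq := LinearEquiv.finrank_eq (R := ZMod 2) (M := (Fin v → ZMod 2) ⧸ W)
      (N := {x // x ∈ W.dualAnnihilator}) (Subspace.quotEquivAnnihilator W)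
    have hq2 := Submodule.finrank_quotient_add_finrank W
    rw [hVfin] at hq2
    omega
  have hAcard : A.card = 2 ^ (v - d) := by
    have h1 : A.card = Fintype.card ↥W.dualAnnihilator := by
      rw [hAdef, ← Fintype.card_subtype]
    rw [h1, card_eq_pow_finrank (K := ZMod 2), hAnnrank, ZMod.card]
  -- derive d = 3
  have hkey : 8 * A.card = Fintype.card ((Fin v → ZMod 2) →ₗ[ZMod 2] ZMod 2) := by
    have h8 : (8 : ℤ) * A.card = Fintype.card ((Fin v → ZMod 2) →ₗ[ZMod 2] ZMod 2) := by
      linarith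
    exact_mod_cast h8
  rw [hDcard, hAcard] at hkey
  have hpow : 2 ^ (v - d + 3) = 2 ^ v := by
    rw [pow_add]
    norm_num
    omega
  have hd3 : d = 3 := by
    have := Nat.pow_right_injective (le_refl 2) hpow
    omega
  refine ⟨W, hd3, ?_⟩
  -- final cardinality argument
  have hWcard : Fintype.card ↥W = 8 := by
    rw [card_eq_pow_finrank (K := ZMod 2), ← hddef, hd3]
    norm_num
  set T : Finset (Fin v → ZMod 2) := Finset.univ.filter (fun x => x ∈ W ∧ x ≠ 0) with hTdef
  have hTcard : T.card = 7 := by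
    have h1 : (Finset.univ.filter (fun x : Fin v → ZMod 2 => x ∈ W)).card = 8 := by
      rw [← Fintype.card_subtype, hWcard]
    have h2 : T = (Finset.univ.filter (fun x : Fin v → ZMod 2 => x ∈ W)).erase 0 := by
      ext x
      simp only [hTdef, Finset.mem_filter, Finset.mem_erase, Finset.mem_univ, true_and]
      tauto
    rw [h2, Finset.card_erase_of_mem (by simp [Submodule.zero_mem]), h1]
  have hST : S ⊆ T := by
    intro x hx
    simp only [hTdef, Finset.mem_filter, Finset.mem_univ, true_and]
    exact ⟨Submodule.subset_span hx, h0 x hx⟩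
  have hSeqT : S = T := Finset.eq_of_subset_of_card_le hST (by omega)
  ext x
  rw [hSeqT]
  simp only [hTdef, Finset.coe_filter, Finset.mem_univ, true_and, Set.mem_setOf_eq]
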